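/- Let S be a discrete semigroup with identity and let π be a non-degenerate probability measure on S. Then every bounded π-harmonic function f : S → ℂ satisfies f(ax) = f(x) for all x ∈ S and all a in the center of S (i.e. all a ∈ S with as = sa for every s ∈ S). -/

import Mathlib

open Filter Topology

private lemma harmonic_key
    {S : Type*} [Monoid S]
    (π : S → ℝ) (hpos : ∀ s, 0 ≤ π s) (hsum : HasSum π 1)
    (hnd : Subsemigroup.closure {s : S | 0 < π s} = ⊤)
    (f : S → ℂ) {C : ℝ} (hb : ∀ x, ‖f x‖ ≤ C)
    (hharm : ∀ x : S, f x = ∑' y : S, f (x * y) * (π y : ℂ))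
    (a : S) (ha : ∀ s : S, a * s = s * a) :
    ∀ x, (f (a * x)).re ≤ (f x).re := by
  classical
  have hπ : Summable π := hsum.summable
  have hC0 : 0 ≤ C := le_trans (norm_nonneg _) (hb 1)
  set u : S → ℝ := fun x => (f (a * x)).re - (f x).re with hu_def
  have hu_bd : ∀ z, |u z| ≤ 2 * C := by
    intro z
    have h1 := hb (a * z); have h2 := hb z
    have h3 : |(f (a * z)).re| ≤ ‖f (a * z)‖ := Complex.abs_re_le_norm _
    have h4 : |(f z).re| ≤ ‖f z‖ := Complex.abs_re_le_norm _
    calc |u z| ≤ |(f (a * z)).re| + |(f z).re| := abs_sub _ _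
      _ ≤ 2 * C := by linarith
  have hsf : ∀ x : S, Summable (fun y => f (x * y) * (π y : ℂ)) := by
    intro x
    apply Summable.of_norm_bounded (g := fun y => C * π y) (hπ.mul_left C)
    intro y
    rw [norm_mul, Complex.norm_real, Real.norm_eq_abs, abs_of_nonneg (hpos y)]
    exact mul_le_mul_of_nonneg_right (hb _) (hpos y)
  have huhs : ∀ x : S, HasSum (fun y => u (x * y) * π y) (u x) := by
    intro x
    have h1 : HasSum (fun y => f ((a * x) * y) * (π y : ℂ)) (f (a * x)) := by
      have := (hsf (a * x)).hasSum
      rwa [← hharm (a * x)] at this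
    have h2 : HasSum (fun y => f (x * y) * (π y : ℂ)) (f x) := by
      have := (hsf x).hasSum
      rwa [← hharm x] at this
    have h1r : HasSum (fun y => (f ((a * x) * y) * (π y : ℂ)).re) (f (a * x)).re :=
      Complex.hasSum_re h1
    have h2r : HasSum (fun y => (f (x * y) * (π y : ℂ)).re) (f x).re :=
      Complex.hasSum_re h2
    have h3 := h1r.sub h2r
    convert h3 using 2 with y
    · rfl
    simp only [hu_def, mul_assoc]
    simp [Complex.mul_re, sub_mul]
  have hsu : ∀ x : S, Summable (fun y => u (x * y) * π y) := fun x => (huhs x).summable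
  have hbdd : BddAbove (Set.range u) := by
    refine ⟨2 * C, ?_⟩
    rintro _ ⟨z, rfl⟩
    exact le_trans (le_abs_self _) (hu_bd z)
  set M : ℝ := ⨆ x, u x with hM_def
  have hle : ∀ x, u x ≤ M := fun x => le_ciSup hbdd x
  -- one-step maximum propagation
  have hstep : ∀ s, 0 < π s → ∀ (ε : ℝ) (x : S), M - π s * ε ≤ u x → M - ε ≤ u (x * s) := by
    intro s hs ε x hx
    have hsplit := (hsu x).tsum_eq_add_tsum_ite s
    have htail_le : (∑' y, if y = s then 0 else u (x * y) * π y)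
        ≤ ∑' y, if y = s then 0 else M * π y := by
      apply Summable.tsum_le_tsum
      · intro y
        by_cases h : y = s
        · simp [h]
        · simp only [h, if_false]
          exact mul_le_mul_of_nonneg_right (hle _) (hpos y)
      · apply Summable.of_norm_bounded (g := fun y => 2 * C * π y) (hπ.mul_left _)
        intro y
        by_cases h : y = s
        · simp only [h, if_true, norm_zero]
          exact mul_nonneg (by linarith) (hpos s)
        · simp only [h, if_false, Real.norm_eq_abs, abs_mul, abs_of_nonneg (hpos y)]
          exact mul_le_mul_of_nonneg_right (hu_bd _) (hpos y)
      · apply Summable.of_norm_bounded (g := fun y => |M| * π y) (hπ.mul_left _)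
        intro y
        by_cases h : y = s
        · simp only [h, if_true, norm_zero]
          exact mul_nonneg (abs_nonneg M) (hpos s)
        · simp only [h, if_false, Real.norm_eq_abs, abs_mul, abs_of_nonneg (hpos y)]
          exact le_rfl
    have htail_eq : (∑' y, if y = s then 0 else M * π y) = M * (1 - π s) := by
      have h1 := hπ.tsum_eq_add_tsum_ite s
      rw [hsum.tsum_eq] at h1
      have h2 : (∑' y, if y = s then 0 else M * π y) = M * ∑' y, if y = s then 0 else π y := by
        rw [← tsum_mul_left]
        congr 1; ext y
        by_cases h : y = s <;> simp [h]
      rw [h2]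
      have h3 : (∑' y, if y = s then 0 else π y) = 1 - π s := by linarith
      rw [h3]
    have hux : u x ≤ u (x * s) * π s + M * (1 - π s) := by
      rw [← (huhs x).tsum_eq, hsplit]
      linarith
    nlinarith
  -- propagate along the generated subsemigroup
  have hQ : ∀ s ∈ Subsemigroup.closure {s : S | 0 < π s},
      ∃ c : ℝ, 0 < c ∧ c ≤ 1 ∧ ∀ (ε : ℝ) (x : S), M - c * ε ≤ u x → M - ε ≤ u (x * s) := by
    intro s hs
    induction hs using Subsemigroup.closure_induction with
    | mem t ht =>
        exact ⟨π t, ht, le_hasSum hsum t (fun i _ => hpos i), fun ε x hx => hstep t ht ε x hx⟩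
    | mul s t _ _ ihs iht =>
        obtain ⟨c₁, hc₁0, hc₁1, hc₁⟩ := ihs
        obtain ⟨c₂, hc₂0, hc₂1, hc₂⟩ := iht
        refine ⟨c₁ * c₂, mul_pos hc₁0 hc₂0, ?_, ?_⟩
        · calc c₁ * c₂ ≤ 1 * 1 := by
                exact mul_le_mul hc₁1 hc₂1 hc₂0.le zero_le_one
            _ = 1 := one_mul 1
        · intro ε x hx
          have h1 : M - c₂ * ε ≤ u (x * s) := by
            apply hc₁ (c₂ * ε) x
            rw [← mul_assoc]; exact hx
          have h2 := hc₂ ε (x * s) h1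
          rwa [mul_assoc] at h2
  obtain ⟨c, hc0, hc1, hc⟩ := hQ a (by rw [hnd]; exact Subsemigroup.mem_top a)
  -- iterate along powers of a
  have hiter : ∀ n : ℕ, ∀ ε : ℝ, 0 < ε → ∀ x : S,
      M - c ^ n * ε ≤ u x → (n : ℝ) * (M - ε) ≤ (f (x * a ^ n)).re - (f x).re := by
    intro n
    induction n with
    | zero => intro ε hε x hx; simp
    | succ n ih =>
        intro ε hε x hx
        have hcn1 : c ^ (n + 1) ≤ 1 := pow_le_one₀ hc0.le hc1
        have h0 : M - ε ≤ u x := by nlinarith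
        have h1 : M - c ^ n * ε ≤ u (x * a) := by
          apply hc (c ^ n * ε) x
          have : c * (c ^ n * ε) = c ^ (n + 1) * ε := by ring
          rw [this]; exact hx
        have h2 := ih ε hε (x * a) h1
        have h3 : u x = (f (x * a)).re - (f x).re := by
          simp only [hu_def, ha x]
        have h4 : x * a * a ^ n = x * a ^ (n + 1) := by
          rw [pow_succ', ← mul_assoc]
        rw [h4] at h2
        push_cast
        nlinarith [h0, h2, h3]
  -- conclude M ≤ 0
  have hM0 : M ≤ 0 := by
    by_contra hM
    push_neg at hM
    have hε : (0 : ℝ) < M / 2 := by linarith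
    obtain ⟨n, hn⟩ := exists_nat_gt ((2 * C) / (M / 2))
    have hpow : 0 < c ^ n * (M / 2) := by positivity
    have hlt : M - c ^ n * (M / 2) < ⨆ x, u x := by
      rw [← hM_def]; linarith
    obtain ⟨x, hx⟩ := exists_lt_of_lt_ciSup hlt
    have h1 := hiter n (M / 2) hε x hx.le
    have h2 : (f (x * a ^ n)).re - (f x).re ≤ 2 * C := by
      have ha1 := (Complex.abs_re_le_norm (f (x * a ^ n))).trans (hb _)
      have ha2 := (Complex.abs_re_le_norm (f x)).trans (hb _)
      rw [abs_le] at ha1 ha2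
      linarith [ha1.1, ha1.2, ha2.1, ha2.2]
    have h3 : (n : ℝ) * (M - M / 2) ≤ 2 * C := le_trans h1 h2
    have h4 : (n : ℝ) * (M / 2) ≤ 2 * C := by
      have : M - M / 2 = M / 2 := by ring
      rwa [this] at h3
    rw [div_lt_iff₀ hε] at hn
    linarith
  intro x
  have := hle x
  simp only [hu_def] at this
  linarith

/-- **Harmonic functions are invariant under central translations.**
Let `S` be a discrete semigroup with identity, `π` a non-degenerate probability measure
on `S` (i.e. `π ≥ 0`, `Σ π = 1` and the support of `π` generates `S` as a semigroup).
Then every bounded `π`-harmonic `f : S → ℂ` satisfies `f (a * x) = f x` for all `x ∈ S`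
and all `a` in the center of `S`. -/
theorem harmonic_central_invariance
    {S : Type*} [Monoid S]
    (π : S → ℝ) (hpos : ∀ s, 0 ≤ π s) (hsum : HasSum π 1)
    (hnd : Subsemigroup.closure {s : S | 0 < π s} = ⊤)
    (f : S → ℂ) (hb : ∃ C : ℝ, ∀ x, ‖f x‖ ≤ C)
    (hharm : ∀ x : S, f x = ∑' y : S, f (x * y) * (π y : ℂ)) :
    ∀ a : S, (∀ s : S, a * s = s * a) → ∀ x : S, f (a * x) = f x := by
  obtain ⟨C, hC⟩ := hb
  intro a ha
  have variant : ∀ μ : ℂ, ∀ x, (μ * f (a * x)).re ≤ (μ * f x).re := by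
    intro μ
    apply harmonic_key π hpos hsum hnd (fun z => μ * f z) (C := ‖μ‖ * C) ?_ ?_ a ha
    · intro z
      show ‖μ * f z‖ ≤ ‖μ‖ * C
      rw [norm_mul]
      exact mul_le_mul_of_nonneg_left (hC z) (norm_nonneg μ)
    · intro z
      show μ * f z = ∑' y, μ * f (z * y) * ↑(π y)
      rw [hharm z, ← tsum_mul_left]
      exact tsum_congr fun y => (mul_assoc _ _ _).symm
  intro x
  have e1 := variant 1 x
  have e2 := variant (-1) x
  have e3 := variant Complex.I x
  have e4 := variant (-Complex.I) x
  simp only [one_mul, Complex.mul_re, Complex.neg_re, Complex.neg_im, Complex.one_re,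
    Complex.one_im, Complex.I_re, Complex.I_im] at e1 e2 e3 e4
  exact Complex.ext (by linarith) (by linarith)
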